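/- In the group ring ℤ[C_n] with n = 4k+1, the element β = (∑_{r=-k+1}^{k} t^r) - (∑_{r=k+2}^{3k} t^r) is a unit. -/

import Mathlib

open Polynomial Finset

/-- `ℤ[X]/(X^n - 1)` has no 2-torsion. -/
lemma aux_two_torsion_free (n : ℕ) (hn : n ≠ 0)
    (a : Polynomial ℤ ⧸ Ideal.span {(Polynomial.X : Polynomial ℤ) ^ n - 1}) (h : 2 * a = 0) :
    a = 0 := by
  obtain ⟨p, rfl⟩ := Ideal.Quotient.mk_surjective a
  have hf : (X ^ n - 1 : ℤ[X]).Monic := by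
    simpa using monic_X_pow_sub_C (1 : ℤ) hn
  have h' : (X ^ n - 1 : ℤ[X]) ∣ 2 * p := by
    rw [← Ideal.mem_span_singleton, ← Ideal.Quotient.eq_zero_iff_mem, map_mul]
    rw [map_ofNat]; exact h
  rw [Ideal.Quotient.eq_zero_iff_mem, Ideal.mem_span_singleton,
    ← modByMonic_eq_zero_iff_dvd hf]
  rw [← modByMonic_eq_zero_iff_dvd hf] at h'
  have h2 : ((2 : ℤ[X]) * p) %ₘ (X ^ n - 1) = 2 * (p %ₘ (X ^ n - 1)) := by
    rw [two_mul, two_mul, add_modByMonic]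
  rw [h2] at h'
  exact (mul_eq_zero.mp h').resolve_left (by norm_num)

set_option maxHeartbeats 1000000 in
theorem stmt_3 (k : ℕ) (hk : 1 ≤ k)
    (t : Polynomial ℤ ⧸ Ideal.span {Polynomial.X ^ (4 * k + 1) - 1})
    (ht : t = Ideal.Quotient.mk _ Polynomial.X) :
    IsUnit ((∑ j ∈ Finset.range (k + 1), t ^ j)
      + (∑ j ∈ Finset.range (k - 1), t ^ (3 * k + 2 + j))
      - (∑ j ∈ Finset.range (2 * k - 1), t ^ (k + 2 + j))) := by
  -- `t` satisfies `t^(4k+1) = 1`.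
  have htn : t ^ (4 * k + 1) = 1 := by
    rw [ht, ← map_pow, ← sub_eq_zero, ← map_one (Ideal.Quotient.mk _), ← map_sub,
      Ideal.Quotient.eq_zero_iff_mem]
    exact Ideal.subset_span rfl
  set γ := ∑ j ∈ Finset.range (2 * k + 1), (-1 :
      Polynomial ℤ ⧸ Ideal.span {(Polynomial.X : Polynomial ℤ) ^ (4 * k + 1) - 1}) ^ j
        * t ^ (k + j) with hγ
  -- generic alternating geometric sum
  have hgeom : ∀ m : ℕ, (∑ i ∈ Finset.range m, (-t) ^ i) * (1 + t) = 1 - (-t) ^ m := by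
    intro m
    have h := geom_sum_mul (-t) m
    linear_combination -h
  -- Step A : (1+t) * γ = t^k + t^(3k+1)
  have hAg : (1 + t) * γ = t ^ k + t ^ (3 * k + 1) := by
    have hγ' : γ = t ^ k * ∑ i ∈ Finset.range (2 * k + 1), (-t) ^ i := by
      rw [hγ, Finset.mul_sum]
      refine Finset.sum_congr rfl fun j _ => ?_
      rw [show (-t) = (-1 : Polynomial ℤ ⧸ Ideal.span
        {(Polynomial.X : Polynomial ℤ) ^ (4 * k + 1) - 1}) * t by ring, mul_pow]
      ring
    have hodd : (-t) ^ (2 * k + 1) = -(t ^ (2 * k + 1)) := Odd.neg_pow ⟨k, by ring⟩ t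
    have hpow : t ^ k * t ^ (2 * k + 1) = t ^ (3 * k + 1) := by
      rw [← pow_add]; congr 1; omega
    calc (1 + t) * γ
        = t ^ k * ((∑ i ∈ Finset.range (2 * k + 1), (-t) ^ i) * (1 + t)) := by rw [hγ']; ring
      _ = t ^ k * (1 - (-t) ^ (2 * k + 1)) := by rw [hgeom]
      _ = t ^ k * 1 + t ^ k * t ^ (2 * k + 1) := by rw [hodd]; ring
      _ = t ^ k + t ^ (3 * k + 1) := by rw [mul_one, hpow]
  -- Step B : β * (t^k + t^(3k+1)) = 1 + t
  have hB : ((∑ j ∈ Finset.range (k + 1), t ^ j)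
      + (∑ j ∈ Finset.range (k - 1), t ^ (3 * k + 2 + j))
      - (∑ j ∈ Finset.range (2 * k - 1), t ^ (k + 2 + j)))
      * (t ^ k + t ^ (3 * k + 1)) = 1 + t := by
    obtain ⟨m, rfl⟩ : ∃ m, k = m + 1 := ⟨k - 1, (Nat.succ_pred_eq_of_pos hk).symm⟩
    have hrange1 : m + 1 - 1 = m := by omega
    have hrange2 : 2 * (m + 1) - 1 = 2 * m + 1 := by omega
    rw [hrange1, hrange2]
    -- helper for reducing exponents
    have hred : ∀ a : ℕ, t ^ (4 * (m + 1) + 1 + a) = t ^ a := by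
      intro a
      calc t ^ (4 * (m + 1) + 1 + a) = t ^ (4 * (m + 1) + 1) * t ^ a := by rw [← pow_add]
        _ = t ^ a := by rw [htn, one_mul]
    have hS1a : (∑ j ∈ Finset.range ((m + 1) + 1), t ^ j) * t ^ (m + 1)
        = ∑ j ∈ Finset.range (m + 1 + 1), t ^ (1 + (m + j)) := by
      rw [Finset.sum_mul]
      refine Finset.sum_congr rfl fun j _ => ?_
      simp only [← pow_add]; congr 1; omega
    have hS1b : (∑ j ∈ Finset.range ((m + 1) + 1), t ^ j) * t ^ (3 * (m + 1) + 1)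
        = 1 + ∑ j ∈ Finset.range (m + 1), t ^ (3 * m + 4 + j) := by
      rw [Finset.sum_range_succ, add_mul, Finset.sum_mul, ← pow_add,
        show (m + 1) + (3 * (m + 1) + 1) = 4 * (m + 1) + 1 by omega, htn]
      have hc : (∑ i ∈ Finset.range (m + 1), t ^ i * t ^ (3 * (m + 1) + 1))
          = ∑ j ∈ Finset.range (m + 1), t ^ (3 * m + 4 + j) := by
        refine Finset.sum_congr rfl fun j _ => ?_
        simp only [← pow_add]; congr 1; omega
      rw [hc]; ring
    have hS2a : (∑ j ∈ Finset.range m, t ^ (3 * (m + 1) + 2 + j)) * t ^ (m + 1)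
        = ∑ j ∈ Finset.range m, t ^ (1 + j) := by
      rw [Finset.sum_mul]
      refine Finset.sum_congr rfl fun j _ => ?_
      calc t ^ (3 * (m + 1) + 2 + j) * t ^ (m + 1)
          = t ^ (4 * (m + 1) + 1 + (1 + j)) := by simp only [← pow_add]; congr 1; omega
        _ = t ^ (1 + j) := hred _
    have hS2b : (∑ j ∈ Finset.range m, t ^ (3 * (m + 1) + 2 + j)) * t ^ (3 * (m + 1) + 1)
        = ∑ j ∈ Finset.range m, t ^ (2 * m + 4 + j) := by
      rw [Finset.sum_mul]
      refine Finset.sum_congr rfl fun j _ => ?_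
      calc t ^ (3 * (m + 1) + 2 + j) * t ^ (3 * (m + 1) + 1)
          = t ^ (4 * (m + 1) + 1 + (2 * m + 4 + j)) := by
            simp only [← pow_add]; congr 1; omega
        _ = t ^ (2 * m + 4 + j) := hred _
    have hS3a : (∑ j ∈ Finset.range (2 * m + 1), t ^ ((m + 1) + 2 + j)) * t ^ (m + 1)
        = (∑ j ∈ Finset.range m, t ^ (2 * m + 4 + j))
          + ∑ j ∈ Finset.range (m + 1), t ^ (3 * m + 4 + j) := by
      rw [Finset.sum_mul, show 2 * m + 1 = m + (m + 1) by omega,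
        Finset.sum_range_add (fun j => t ^ ((m + 1) + 2 + j) * t ^ (m + 1)) m (m + 1)]
      congr 1
      · refine Finset.sum_congr rfl fun j _ => ?_
        simp only [← pow_add]; congr 1; omega
      · refine Finset.sum_congr rfl fun j _ => ?_
        simp only [← pow_add]; congr 1; omega
    have hS3b : (∑ j ∈ Finset.range (2 * m + 1), t ^ ((m + 1) + 2 + j)) * t ^ (3 * (m + 1) + 1)
        = ∑ j ∈ Finset.range (2 * m + 1), t ^ (2 + j) := by
      rw [Finset.sum_mul]
      refine Finset.sum_congr rfl fun j _ => ?_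
      calc t ^ ((m + 1) + 2 + j) * t ^ (3 * (m + 1) + 1)
          = t ^ (4 * (m + 1) + 1 + (2 + j)) := by simp only [← pow_add]; congr 1; omega
        _ = t ^ (2 + j) := hred _
    have hjoin : (∑ j ∈ Finset.range m, t ^ (1 + j))
        + (∑ j ∈ Finset.range (m + 1 + 1), t ^ (1 + (m + j)))
        = t + ∑ j ∈ Finset.range (2 * m + 1), t ^ (2 + j) := by
      have h1 : (∑ j ∈ Finset.range m, t ^ (1 + j))
          + (∑ j ∈ Finset.range (m + 1 + 1), t ^ (1 + (m + j)))
          = ∑ j ∈ Finset.range (m + (m + 1 + 1)), t ^ (1 + j) :=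
        (Finset.sum_range_add (fun j => t ^ (1 + j)) m (m + 1 + 1)).symm
      rw [h1, show m + (m + 1 + 1) = (2 * m + 1) + 1 by omega,
        Finset.sum_range_succ' (fun j => t ^ (1 + j)) (2 * m + 1)]
      have hc : (∑ j ∈ Finset.range (2 * m + 1), t ^ (1 + (j + 1)))
          = ∑ j ∈ Finset.range (2 * m + 1), t ^ (2 + j) := by
        refine Finset.sum_congr rfl fun j _ => ?_
        congr 1; omega
      rw [hc, show (1 + 0) = 1 from rfl, pow_one]
      exact add_comm _ _
    calc ((∑ j ∈ Finset.range ((m + 1) + 1), t ^ j)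
          + (∑ j ∈ Finset.range m, t ^ (3 * (m + 1) + 2 + j))
          - ∑ j ∈ Finset.range (2 * m + 1), t ^ ((m + 1) + 2 + j))
          * (t ^ (m + 1) + t ^ (3 * (m + 1) + 1))
        = (∑ j ∈ Finset.range ((m + 1) + 1), t ^ j) * t ^ (m + 1)
          + (∑ j ∈ Finset.range ((m + 1) + 1), t ^ j) * t ^ (3 * (m + 1) + 1)
          + (∑ j ∈ Finset.range m, t ^ (3 * (m + 1) + 2 + j)) * t ^ (m + 1)
          + (∑ j ∈ Finset.range m, t ^ (3 * (m + 1) + 2 + j)) * t ^ (3 * (m + 1) + 1)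
          - (∑ j ∈ Finset.range (2 * m + 1), t ^ ((m + 1) + 2 + j)) * t ^ (m + 1)
          - (∑ j ∈ Finset.range (2 * m + 1), t ^ ((m + 1) + 2 + j)) * t ^ (3 * (m + 1) + 1)
          := by ring
      _ = 1 + t := by rw [hS1a, hS1b, hS2a, hS2b, hS3a, hS3b]; linear_combination hjoin
  -- Step C : cancel (1+t) using 2-torsion-freeness
  set β := (∑ j ∈ Finset.range (k + 1), t ^ j)
      + (∑ j ∈ Finset.range (k - 1), t ^ (3 * k + 2 + j))
      - (∑ j ∈ Finset.range (2 * k - 1), t ^ (k + 2 + j)) with hβdef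
  have hkey : (1 + t) * (β * γ - 1) = 0 := by
    have hc : (1 + t) * (β * γ) = β * ((1 + t) * γ) := by ring
    rw [mul_sub, hc, hAg, hB, mul_one, sub_self]
  have hδ : (∑ i ∈ Finset.range (4 * k + 1), (-t) ^ i) * (1 + t) = 2 := by
    rw [hgeom, Odd.neg_pow ⟨2 * k, by ring⟩ t, htn]; ring
  have h2 : 2 * (β * γ - 1) = 0 := by
    calc 2 * (β * γ - 1)
        = (∑ i ∈ Finset.range (4 * k + 1), (-t) ^ i) * ((1 + t) * (β * γ - 1)) := by
          rw [← mul_assoc, hδ]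
      _ = 0 := by rw [hkey, mul_zero]
  have hβγ : β * γ = 1 := by
    have h0 := aux_two_torsion_free (4 * k + 1) (by omega) _ h2
    exact sub_eq_zero.mp h0
  exact isUnit_iff_exists_inv.mpr ⟨γ, hβγ⟩
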